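/- Let n ≥ 1 and let A be an invertible n×n real matrix all of whose eigenvalues (roots in ℂ of its characteristic polynomial) have the same absolute value, and suppose A, regarded as a complex matrix, is not diagonalizable over ℂ. Then ‖A^m‖^n / |det(A^m)| tends to infinity as m → ∞, where ‖·‖ denotes the operator norm with respect to the Euclidean norm on ℝ^n. -/

import Mathlib

open Filter

/-- Operator norm of a real matrix acting on Euclidean space. -/
noncomputable def euclideanOpNorm {n : ℕ} (A : Matrix (Fin n) (Fin n) ℝ) : ℝ :=
  ‖Matrix.toEuclideanCLM (𝕜 := ℝ) A‖

open Matrix Polynomial Module in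
lemma my_exists_gen_eig {n : ℕ} (B : Matrix (Fin n) (Fin n) ℂ)
    (hnd : ¬ ∃ (P : Matrix (Fin n) (Fin n) ℂ) (d : Fin n → ℂ),
      IsUnit P.det ∧ B = P⁻¹ * Matrix.diagonal d * P) :
    ∃ (μ : ℂ) (v w : Fin n → ℂ), w ≠ 0 ∧ B *ᵥ w = μ • w ∧ B *ᵥ v = μ • v + w := by
  by_contra hcon
  push_neg at hcon
  apply hnd
  set f : Module.End ℂ (Fin n → ℂ) := Matrix.toLin' B with hf
  have hker : ∀ (μ : ℂ) (k : ℕ) (x : Fin n → ℂ), ((f - μ • 1) ^ k) x = 0 → (f - μ • 1) x = 0 := by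
    intro μ k
    induction k with
    | zero => intro x hx; simp only [pow_zero, Module.End.one_apply] at hx; simp [hx]
    | succ k ih =>
      intro x hx
      have h1 : ((f - μ • 1) ^ k) ((f - μ • 1) x) = 0 := by
        rw [← Module.End.mul_apply, ← pow_succ]; exact hx
      have h2 := ih _ h1
      by_cases hw : (f - μ • 1) x = 0
      · exact hw
      · exfalso
        have hBw : B *ᵥ ((f - μ • 1) x) = μ • ((f - μ • 1) x) := by
          have : f ((f - μ • 1) x) = μ • ((f - μ • 1) x) := by
            have := sub_eq_zero.mp (by simpa [LinearMap.sub_apply] using h2)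
            simpa using this
          simpa [hf, Matrix.toLin'_apply] using this
        have hBv : B *ᵥ x = μ • x + (f - μ • 1) x := by
          have : f x = μ • x + (f - μ • 1) x := by
            simp [LinearMap.sub_apply]
          simpa [hf, Matrix.toLin'_apply] using this
        exact hcon μ x _ hw hBw hBv
  have hmax : ∀ μ : ℂ, f.maxGenEigenspace μ ≤ f.eigenspace μ := by
    intro μ x hx
    rw [Module.End.maxGenEigenspace, Module.End.mem_genEigenspace_top] at hx
    obtain ⟨k, hk⟩ := hx
    rw [LinearMap.mem_ker] at hk
    rw [Module.End.mem_eigenspace_iff]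
    have := hker μ k x hk
    have := sub_eq_zero.mp (by simpa [LinearMap.sub_apply] using this)
    simpa using this
  have hsup : ⨆ μ : ℂ, f.eigenspace μ = ⊤ :=
    le_antisymm le_top (by
      rw [← Module.End.iSup_maxGenEigenspace_eq_top f]
      exact iSup_mono hmax)
  have hInt : DirectSum.IsInternal f.eigenspace :=
    (DirectSum.isInternal_submodule_iff_iSupIndep_and_iSup_eq_top _).mpr
      ⟨f.eigenspaces_iSupIndep, hsup⟩
  let bb : ∀ μ : ℂ, Basis _ ℂ (f.eigenspace μ) := fun μ => Module.Free.chooseBasis ℂ _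
  let b0 := hInt.collectedBasis bb
  let e := b0.indexEquiv (Pi.basisFun ℂ (Fin n))
  let b' := b0.reindex e
  let d : Fin n → ℂ := fun i => (e.symm i).1
  have heig : ∀ i, f (b' i) = d i • b' i := by
    intro i
    have hm := hInt.collectedBasis_mem bb (e.symm i)
    have hb : b' i = b0 (e.symm i) := b0.reindex_apply e i
    rw [hb]
    exact Module.End.mem_eigenspace_iff.mp hm
  have hdiag : LinearMap.toMatrix b' b' f = Matrix.diagonal d := by
    ext i k
    rw [LinearMap.toMatrix_apply, heig k, _root_.map_smul, Finsupp.smul_apply, Basis.repr_self,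
      Matrix.diagonal_apply]
    by_cases h : i = k
    · subst h; simp
    · simp [Finsupp.single_apply, h, Ne.symm h]
  have hB : LinearMap.toMatrix (Pi.basisFun ℂ (Fin n)) (Pi.basisFun ℂ (Fin n)) f = B := by
    rw [LinearMap.toMatrix_eq_toMatrix']
    exact LinearMap.toMatrix'_toLin' B
  set P := b'.toMatrix (Pi.basisFun ℂ (Fin n)) with hP
  set Q := (Pi.basisFun ℂ (Fin n)).toMatrix b' with hQ
  have hQP : Q * P = 1 := Basis.toMatrix_mul_toMatrix_flip _ _
  refine ⟨P, d, Matrix.isUnit_det_of_left_inverse hQP, ?_⟩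
  have hmain : Q * Matrix.diagonal d * P = B := by
    rw [← hdiag, hP, hQ, basis_toMatrix_mul_linearMap_toMatrix_mul_basis_toMatrix, hB]
  rw [Matrix.inv_eq_left_inv hQP, hmain]

open Matrix Polynomial Module in
lemma my_isRoot_of_eig {n : ℕ} (B : Matrix (Fin n) (Fin n) ℂ) {μ : ℂ} {w : Fin n → ℂ}
    (hw : w ≠ 0) (h : B *ᵥ w = μ • w) : B.charpoly.IsRoot μ := by
  have h2 : (μ • (1 : Matrix (Fin n) (Fin n) ℂ) - B) *ᵥ w = 0 := by
    rw [Matrix.sub_mulVec, Matrix.smul_mulVec, Matrix.one_mulVec, h, sub_self]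
  have hdet : (μ • (1 : Matrix (Fin n) (Fin n) ℂ) - B).det = 0 :=
    Matrix.exists_mulVec_eq_zero_iff.mp ⟨w, hw, h2⟩
  have heval : B.charpoly.eval μ = (μ • (1 : Matrix (Fin n) (Fin n) ℂ) - B).det := by
    rw [Matrix.charpoly, eval_det, matPolyEquiv_charmatrix]
    rw [Matrix.scalar_apply, Matrix.smul_one_eq_diagonal, Polynomial.eval_sub,
      Polynomial.eval_X, Polynomial.eval_C]
  rwa [Polynomial.IsRoot, heval]

open Matrix Polynomial Module in
lemma my_entry_le {n : ℕ} (M : Matrix (Fin n) (Fin n) ℝ) (i j : Fin n) :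
    |M i j| ≤ euclideanOpNorm M := by
  set T := Matrix.toEuclideanCLM (𝕜 := ℝ) M
  set x : EuclideanSpace ℝ (Fin n) := (WithLp.equiv 2 _).symm (Pi.single j 1)
  have hx : ‖x‖ = 1 := by
    rw [show x = EuclideanSpace.single j (1 : ℝ) from rfl, EuclideanSpace.norm_single]
    norm_num
  have hTx : T x = (WithLp.equiv 2 _).symm (M *ᵥ Pi.single j 1) := by
    rfl
  have hcoord : |(M *ᵥ Pi.single j 1) i| ≤ ‖T x‖ := by
    rw [hTx, EuclideanSpace.norm_eq]
    have h1 : |(M *ᵥ Pi.single j 1) i| =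
        Real.sqrt (((M *ᵥ Pi.single j 1) i) ^ 2) := (Real.sqrt_sq_eq_abs _).symm
    rw [h1]
    apply Real.sqrt_le_sqrt
    have := Finset.single_le_sum (f := fun t => ‖((WithLp.equiv 2 (Fin n → ℝ)).symm (M *ᵥ Pi.single j 1)) t‖ ^ 2)
      (fun t _ => by positivity) (Finset.mem_univ i)
    simpa [Real.norm_eq_abs, sq_abs] using this
  have hMij : (M *ᵥ Pi.single j 1) i = M i j := by
    simp [Matrix.mulVec, dotProduct, Pi.single_apply, mul_ite]
  calc |M i j| = |(M *ᵥ Pi.single j 1) i| := by rw [hMij]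
    _ ≤ ‖T x‖ := hcoord
    _ ≤ ‖T‖ * ‖x‖ := T.le_opNorm x
    _ = euclideanOpNorm M := by rw [hx, mul_one]; rfl

open Matrix Polynomial Module in
lemma my_iter {n : ℕ} (B : Matrix (Fin n) (Fin n) ℂ) {μ : ℂ} {v w : Fin n → ℂ}
    (hw : B *ᵥ w = μ • w) (hv : B *ᵥ v = μ • v + w) (m : ℕ) :
    (B ^ (m + 1)) *ᵥ v = μ ^ (m + 1) • v + (((m : ℂ) + 1) * μ ^ m) • w := by
  induction m with
  | zero => simpa using hv
  | succ m ih =>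
    have : B ^ (m + 2) = B * B ^ (m + 1) := by rw [← pow_succ']
    rw [this, ← Matrix.mulVec_mulVec, ih]
    rw [Matrix.mulVec_add, Matrix.mulVec_smul, Matrix.mulVec_smul, hv, hw]
    push_cast
    match_scalars <;> ring

open Matrix Polynomial Module in
theorem stmt_2 {n : ℕ} (hn : 1 ≤ n) (A : Matrix (Fin n) (Fin n) ℝ)
    (hA : IsUnit A.det)
    (hroots : ∀ μ₁ μ₂ : ℂ, (A.map Complex.ofReal).charpoly.IsRoot μ₁ →
      (A.map Complex.ofReal).charpoly.IsRoot μ₂ → ‖μ₁‖ = ‖μ₂‖)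
    (hnotdiag : ¬ ∃ (P : Matrix (Fin n) (Fin n) ℂ) (d : Fin n → ℂ),
      IsUnit P.det ∧ A.map Complex.ofReal = P⁻¹ * Matrix.diagonal d * P) :
    Tendsto (fun m : ℕ => euclideanOpNorm (A ^ m) ^ n / |(A ^ m).det|) atTop atTop := by
  set B := A.map Complex.ofReal with hBdef
  obtain ⟨μ, v, w, hw0, hww, hvw⟩ := my_exists_gen_eig B hnotdiag
  set r := ‖μ‖ with hrdef
  have hroot : B.charpoly.IsRoot μ := my_isRoot_of_eig B hw0 hww
  have hdetB : B.det = (A.det : ℂ) := by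
    rw [hBdef]
    exact (RingHom.map_det Complex.ofRealHom A).symm
  have hcard : Multiset.card B.charpoly.roots = n := by
    have hsp : B.charpoly.Splits := IsAlgClosed.splits _
    rw [splits_iff_card_roots] at hsp
    rw [hsp, Matrix.charpoly_natDegree_eq_dim, Fintype.card_fin]
  have habsdet : ‖B.det‖ = r ^ n := by
    rw [Matrix.det_eq_prod_roots_charpoly]
    show normHom (B.charpoly.roots.prod) = r ^ n
    rw [map_multiset_prod]
    have hrepl : B.charpoly.roots.map (normHom : ℂ →*₀ ℝ) = Multiset.replicate n r := by
      rw [Multiset.eq_replicate]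
      constructor
      · rw [Multiset.card_map, hcard]
      · intro b hb
        obtain ⟨μ', hμ', hb'⟩ := Multiset.mem_map.mp hb
        have hroot' : B.charpoly.IsRoot μ' :=
          (Polynomial.mem_roots (B.charpoly_monic.ne_zero)).mp hμ'
        rw [← hb']
        exact hroots μ' μ hroot' hroot
    rw [hrepl, Multiset.prod_replicate]
  have hdetA : |A.det| = r ^ n := by
    rw [← Real.norm_eq_abs, ← Complex.norm_real, ← hdetB, habsdet]
  have hrne : r ≠ 0 := by
    intro h0
    apply hA.ne_zero
    apply abs_eq_zero.mp
    rw [hdetA, h0, zero_pow (by omega : n ≠ 0)]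
  have hr0 : 0 < r := lt_of_le_of_ne (norm_nonneg μ) (Ne.symm hrne)
  obtain ⟨j, hj⟩ := Function.ne_iff.mp hw0
  set a := ‖w j‖ with hadef
  set bv := ‖v j‖ with hbvdef
  set Cs := ∑ t, ‖v t‖ with hCsdef
  have ha : 0 < a := norm_pos_iff.mpr hj
  have hv0 : v ≠ 0 := by
    intro h
    apply hw0
    rw [h] at hvw
    simpa [Matrix.mulVec_zero] using hvw.symm
  have hCs : 0 < Cs := by
    obtain ⟨t, ht⟩ := Function.ne_iff.mp hv0
    exact Finset.sum_pos' (fun i _ => norm_nonneg _)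
      ⟨t, Finset.mem_univ t, norm_pos_iff.mpr ht⟩
  have hBpow : ∀ k : ℕ, B ^ k = (A ^ k).map Complex.ofReal := by
    intro k
    have := map_pow (Complex.ofRealHom.mapMatrix) A k
    exact this.symm
  have hkey : ∀ m : ℕ, ((m : ℝ) + 1) * r ^ m * a ≤
      Cs * euclideanOpNorm (A ^ (m + 1)) + r ^ (m + 1) * bv := by
    intro m
    have hiter := my_iter B hww hvw m
    have hcoordeq : (((m : ℂ) + 1) * μ ^ m) * w j
        = ((B ^ (m + 1)) *ᵥ v) j - μ ^ (m + 1) * v j := by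
      rw [hiter]
      simp only [Pi.add_apply, Pi.smul_apply, smul_eq_mul]
      ring
    have h1 : ‖(((m : ℂ) + 1) * μ ^ m) * w j‖ = ((m : ℝ) + 1) * r ^ m * a := by
      rw [norm_mul, norm_mul, norm_pow]
      congr 2
      have : ((m : ℂ) + 1) = ((m + 1 : ℕ) : ℂ) := by push_cast; ring
      rw [this, Complex.norm_natCast]
      push_cast; ring
    have h2 : ‖((B ^ (m + 1)) *ᵥ v) j‖ ≤ Cs * euclideanOpNorm (A ^ (m + 1)) := by
      have heq : ((B ^ (m + 1)) *ᵥ v) j = ∑ t, (B ^ (m + 1)) j t * v t := rfl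
      rw [heq]
      calc ‖∑ t, (B ^ (m + 1)) j t * v t‖
          ≤ ∑ t, ‖(B ^ (m + 1)) j t * v t‖ := norm_sum_le _ _
        _ = ∑ t, |(A ^ (m + 1)) j t| * ‖v t‖ := by
            apply Finset.sum_congr rfl
            intro t _
            rw [norm_mul, hBpow (m + 1), Matrix.map_apply, Complex.norm_real, Real.norm_eq_abs]
        _ ≤ ∑ t, euclideanOpNorm (A ^ (m + 1)) * ‖v t‖ := by
            apply Finset.sum_le_sum
            intro t _
            exact mul_le_mul_of_nonneg_right (my_entry_le _ _ _) (norm_nonneg _)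
        _ = Cs * euclideanOpNorm (A ^ (m + 1)) := by rw [← Finset.mul_sum]; ring
    have h3 : ‖μ ^ (m + 1) * v j‖ = r ^ (m + 1) * bv := by
      rw [norm_mul, norm_pow]
    calc ((m : ℝ) + 1) * r ^ m * a
        = ‖(((m : ℂ) + 1) * μ ^ m) * w j‖ := h1.symm
      _ = ‖((B ^ (m + 1)) *ᵥ v) j - μ ^ (m + 1) * v j‖ := by rw [hcoordeq]
      _ ≤ ‖((B ^ (m + 1)) *ᵥ v) j‖ + ‖μ ^ (m + 1) * v j‖ :=
          norm_sub_le _ _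
      _ ≤ Cs * euclideanOpNorm (A ^ (m + 1)) + r ^ (m + 1) * bv := by
          rw [h3]
          exact add_le_add_left h2 _
  -- pass to the limit
  apply (Filter.tendsto_add_atTop_iff_nat 1).mp
  have h0 : Tendsto (fun m : ℕ => ((m : ℝ) + 1) * a - r * bv) atTop atTop := by
    have h1 : Tendsto (fun m : ℕ => ((m : ℝ) + 1)) atTop atTop :=
      tendsto_atTop_add_const_right _ _ tendsto_natCast_atTop_atTop
    have h2 := Tendsto.atTop_mul_const ha h1
    simpa [sub_eq_add_neg] using tendsto_atTop_add_const_right _ (-(r * bv)) h2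
  have hg : Tendsto (fun m : ℕ => (((m : ℝ) + 1) * a - r * bv) ^ n / (Cs * r) ^ n)
      atTop atTop := by
    have h3 := (tendsto_pow_atTop (n := n) (by omega : n ≠ 0)).comp h0
    have hpos : (0 : ℝ) < (Cs * r) ^ n := pow_pos (mul_pos hCs hr0) n
    simpa [Function.comp] using Tendsto.atTop_div_const hpos h3
  refine tendsto_atTop_mono' atTop ?_ hg
  filter_upwards [h0.eventually_ge_atTop 0] with m hm
  set s := ((m : ℝ) + 1) * a - r * bv with hsdef
  set N := euclideanOpNorm (A ^ (m + 1)) with hNdef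
  have hN0 : 0 ≤ N := norm_nonneg _
  have hNapprox : r ^ m * s / Cs ≤ N := by
    rw [div_le_iff₀ hCs, hsdef]
    have hkm := hkey m
    rw [pow_succ r m, ← hNdef] at hkm
    linarith
  have hlow0 : 0 ≤ r ^ m * s / Cs :=
    div_nonneg (mul_nonneg (pow_nonneg hr0.le m) hm) hCs.le
  have hdetm : |(A ^ (m + 1)).det| = (r ^ n) ^ (m + 1) := by
    rw [Matrix.det_pow, abs_pow, hdetA]
  have heq : s ^ n / (Cs * r) ^ n = (r ^ m * s / Cs) ^ n / ((r ^ n) ^ (m + 1)) := by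
    have h1 : ((r ^ n) ^ (m + 1) : ℝ) = (r ^ m) ^ n * r ^ n := by
      rw [← pow_mul, ← pow_mul, ← pow_add]
      ring_nf
    rw [div_pow, mul_pow, h1, div_div]
    rw [show Cs ^ n * ((r ^ m) ^ n * r ^ n) = (r ^ m) ^ n * (Cs ^ n * r ^ n) from by ring,
      mul_pow, mul_div_mul_left _ _ (pow_ne_zero n (pow_ne_zero m hrne))]
  calc s ^ n / (Cs * r) ^ n
      = (r ^ m * s / Cs) ^ n / ((r ^ n) ^ (m + 1)) := heq
    _ ≤ N ^ n / ((r ^ n) ^ (m + 1)) := by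
        have hnum := pow_le_pow_left₀ hlow0 hNapprox n
        have hpos : (0 : ℝ) < (r ^ n) ^ (m + 1) := pow_pos (pow_pos hr0 n) (m + 1)
        exact (div_le_div_iff_of_pos_right hpos).mpr hnum
    _ = euclideanOpNorm (A ^ (m + 1)) ^ n / |(A ^ (m + 1)).det| := by rw [hdetm, hNdef]
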